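/- Let c ∈ ℝ and Ū, D ∈ ℝ² with |D₁+D₂| < 1, and let M(D) denote the 2×2 matrix with diagonal entries 1 and off-diagonal entries −(D₁+D₂). Then the supremum over U ∈ ℝ² of 𝓛(U, D, Ū) is attained and equals ½ ⟨M(D)⁻¹ w, w⟩ − ½ |(c,c) − Ū|², where w = D − Ū + (c,c). -/

import Mathlib

open Matrix

/-- The toy-model pre-dual Lagrangian
`𝓛(U,D,Ū) = (U₁−c)(U₂−c)(D₁+D₂) − (U₁−c)D₁ − (U₂−c)D₂ − ½|U−Ū|²`. -/
noncomputable def Ltoy (c : ℝ) (U D Ub : ℝ × ℝ) : ℝ :=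
  (U.1 - c) * (U.2 - c) * (D.1 + D.2) - (U.1 - c) * D.1 - (U.2 - c) * D.2
    - (1 / 2) * ((U.1 - Ub.1) ^ 2 + (U.2 - Ub.2) ^ 2)

/-- The matrix `M(D)` with diagonal entries `1` and off-diagonal entries `−(D₁+D₂)`. -/
def Mtoy (D : ℝ × ℝ) : Matrix (Fin 2) (Fin 2) ℝ :=
  !![1, -(D.1 + D.2); -(D.1 + D.2), 1]

/-- if `|D₁+D₂| < 1` then `sup_U 𝓛(U,D,Ū)` is attained and equals
`½⟨M(D)⁻¹ w, w⟩ − ½|(c,c)−Ū|²` where `w = D − Ū + (c,c)`. -/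
theorem stmt12 (c : ℝ) (Ub D : ℝ × ℝ) (hD : |D.1 + D.2| < 1) :
    IsGreatest (Set.range fun U : ℝ × ℝ => Ltoy c U D Ub)
      ((1 / 2) * ((Mtoy D)⁻¹.mulVec ![D.1 - Ub.1 + c, D.2 - Ub.2 + c]
          ⬝ᵥ ![D.1 - Ub.1 + c, D.2 - Ub.2 + c])
        - (1 / 2) * ((c - Ub.1) ^ 2 + (c - Ub.2) ^ 2)) := by
  obtain ⟨h1, h2⟩ := abs_lt.mp hD
  set s := D.1 + D.2 with hs
  have hd : (0:ℝ) < 1 - s^2 := by nlinarith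
  have hd' : (1 - s^2) ≠ 0 := ne_of_gt hd
  set w1 := D.1 - Ub.1 + c
  set w2 := D.2 - Ub.2 + c
  have hdet : (Mtoy D).det = 1 - s^2 := by
    simp [Mtoy, Matrix.det_fin_two_of]; ring
  have hinv : (Mtoy D)⁻¹ = (1 - s^2)⁻¹ • !![1, s; s, 1] := by
    rw [Matrix.inv_def, hdet, Matrix.adjugate_fin_two]
    simp [Mtoy, Ring.inverse_eq_inv]
    exact Or.inl rfl
  have hval : (1 / 2) * ((Mtoy D)⁻¹.mulVec ![D.1 - Ub.1 + c, D.2 - Ub.2 + c]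
          ⬝ᵥ ![D.1 - Ub.1 + c, D.2 - Ub.2 + c])
        - (1 / 2) * ((c - Ub.1) ^ 2 + (c - Ub.2) ^ 2)
      = (1/2) * ((w1^2 + 2*s*w1*w2 + w2^2)/(1 - s^2))
        - (1/2) * ((c - Ub.1)^2 + (c - Ub.2)^2) := by
    rw [hinv]
    simp [Matrix.mulVec, dotProduct, Fin.sum_univ_two]
    field_simp
    ring
  rw [hval]
  constructor
  · refine ⟨(c - (w1 + s*w2)/(1 - s^2), c - (s*w1 + w2)/(1 - s^2)), ?_⟩
    simp only [Ltoy]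
    field_simp
    ring
  · rintro y ⟨U, rfl⟩
    simp only [Ltoy]
    have key : (1/2) * ((w1^2 + 2*s*w1*w2 + w2^2)/(1 - s^2))
        - (1/2) * ((c - Ub.1)^2 + (c - Ub.2)^2)
      - ((U.1 - c) * (U.2 - c) * (D.1 + D.2) - (U.1 - c) * D.1 - (U.2 - c) * D.2
        - (1 / 2) * ((U.1 - Ub.1) ^ 2 + (U.2 - Ub.2) ^ 2))
      = (1/2) * (((U.1 - (c - (w1 + s*w2)/(1 - s^2))) - s*(U.2 - (c - (s*w1 + w2)/(1 - s^2))))^2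
          + (1 - s^2) * (U.2 - (c - (s*w1 + w2)/(1 - s^2)))^2) := by
      field_simp
      ring
    have hpos : 0 ≤ (1/2) * (((U.1 - (c - (w1 + s*w2)/(1 - s^2))) - s*(U.2 - (c - (s*w1 + w2)/(1 - s^2))))^2
          + (1 - s^2) * (U.2 - (c - (s*w1 + w2)/(1 - s^2)))^2) := by positivity
    linarith [key, hpos]
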